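/- Let n ≥ 1. The uniform average over A ∈ ℬₙ of the rank-one projector onto the real equatorial stabilizer state equals the maximally mixed state: (1/|ℬₙ|) Σ_{A ∈ ℬₙ} φ^{req}_A (φ^{req}_A)† = (1/2ⁿ)·I, where I is the 2ⁿ×2ⁿ identity matrix and |ℬₙ| = 2^{(n²+n)/2}. -/

import Mathlib

open Finset Matrix

/-- Bit strings of length `n`, with entries viewed as `0/1` integers via `Fin 2`. -/
abbrev Bits (n : ℕ) := Fin n → Fin 2

/-- The index set `ℬₙ`: upper-triangular `n × n` matrices with entries in `{0,1}`
(`a_{ij} = 0` for `i > j`). -/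
noncomputable def Bn (n : ℕ) : Finset (Matrix (Fin n) (Fin n) (Fin 2)) :=
  open Classical in Finset.univ.filter fun A => ∀ i j : Fin n, j < i → A i j = 0

/-- The quadratic form `xᵀ A x = Σ_{i,j} a_{ij} x_i x_j` (only `i ≤ j` terms contribute),
computed as a natural number; only its parity matters below. -/
def quadB {n : ℕ} (A : Matrix (Fin n) (Fin n) (Fin 2)) (x : Bits n) : ℕ :=
  ∑ i, ∑ j, (A i j : ℕ) * (x i : ℕ) * (x j : ℕ)

/-- The real equatorial stabilizer state `φ^{req}_A`, with components
`φ^{req}_A(x) = 2^{-n/2} (−1)^{xᵀAx}`. -/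
noncomputable def phiReq {n : ℕ} (A : Matrix (Fin n) (Fin n) (Fin 2)) (x : Bits n) : ℂ :=
  (-1 : ℂ) ^ quadB A x / (Real.sqrt (2 ^ n) : ℂ)

/-- The rank-one projector `φ φ†` onto a vector `φ`. -/
noncomputable def outer {ι : Type*} (φ : ι → ℂ) : Matrix ι ι ℂ :=
  Matrix.of fun x y => φ x * (starRingEnd ℂ) (φ y)

lemma quadB_prod {n : ℕ} (A : Matrix (Fin n) (Fin n) (Fin 2)) (x : Bits n) :
    quadB A x = ∑ pq : Fin n × Fin n, (A pq.1 pq.2 : ℕ) * (x pq.1 : ℕ) * (x pq.2 : ℕ) := by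
  rw [quadB, Fintype.sum_prod_type]

lemma quad_flip {n : ℕ} (A : Matrix (Fin n) (Fin n) (Fin 2)) (i : Fin n) (x : Bits n) :
    (-1:ℂ) ^ quadB (A + Matrix.single i i 1) x =
      (-1:ℂ) ^ quadB A x * (-1:ℂ) ^ ((x i : ℕ)) := by
  set E := Matrix.single i i (1 : Fin 2) with hE
  have key : ∀ B : Matrix (Fin n) (Fin n) (Fin 2),
      quadB B x = (B i i : ℕ) * (x i : ℕ) * (x i : ℕ) +
        ∑ pq ∈ (univ : Finset (Fin n × Fin n)).erase (i,i),
          (B pq.1 pq.2 : ℕ) * (x pq.1 : ℕ) * (x pq.2 : ℕ) := by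
    intro B
    rw [quadB_prod, ← Finset.add_sum_erase _ _ (Finset.mem_univ (i,i))]
  have hrest : ∀ pq ∈ (univ : Finset (Fin n × Fin n)).erase (i,i),
      ((A + E) pq.1 pq.2 : ℕ) * (x pq.1 : ℕ) * (x pq.2 : ℕ)
        = (A pq.1 pq.2 : ℕ) * (x pq.1 : ℕ) * (x pq.2 : ℕ) := by
    intro pq hpq
    have hne : pq ≠ (i,i) := Finset.ne_of_mem_erase hpq
    have : E pq.1 pq.2 = 0 := by
      rw [hE]
      rw [Matrix.single]
      simp only [Matrix.of_apply]
      rw [if_neg]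
      rintro ⟨h1, h2⟩
      exact hne (Prod.ext h1.symm h2.symm)
    rw [Matrix.add_apply, this, add_zero]
  rw [key (A + E), key A, Finset.sum_congr rfl hrest]
  have hAE : (A + E) i i = A i i + 1 := by
    rw [Matrix.add_apply, hE]
    simp [Matrix.single]
  rw [hAE, pow_add, pow_add]
  have h2 : A i i = 0 ∨ A i i = 1 := by omega
  have h3 : x i = 0 ∨ x i = 1 := by omega
  rcases h2 with h | h <;> rcases h3 with h' | h' <;> rw [h, h'] <;>
    norm_num [show ((1:Fin 2)+1) = 0 by decide, show ((0:Fin 2)+1) = 1 by decide, show ((2:Fin 2):ℕ) = 0 by decide]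

lemma E_mem {n : ℕ} (i : Fin n) (A : Matrix (Fin n) (Fin n) (Fin 2)) (hA : A ∈ Bn n) :
    A + Matrix.single i i 1 ∈ Bn n := by
  simp only [Bn, Finset.mem_filter, Finset.mem_univ, true_and] at hA ⊢
  intro p q hq
  rw [Matrix.add_apply, hA p q hq, Matrix.single]
  simp only [Matrix.of_apply]
  rw [if_neg, add_zero]
  rintro ⟨h1, h2⟩
  exact absurd (h1 ▸ h2 ▸ hq) (lt_irrefl _)

lemma E_invol {n : ℕ} (i : Fin n) (A : Matrix (Fin n) (Fin n) (Fin 2)) :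
    A + Matrix.single i i 1 + Matrix.single i i 1 = A := by
  ext p q
  simp only [Matrix.add_apply, add_assoc]
  rw [Matrix.single]
  simp only [Matrix.of_apply]
  split <;> simp_all

lemma sum_sign_ne {n : ℕ} (x y : Bits n) (hxy : x ≠ y) :
    ∑ A ∈ Bn n, (-1:ℂ) ^ (quadB A x + quadB A y) = 0 := by
  obtain ⟨i, hi⟩ : ∃ i, x i ≠ y i := by
    by_contra h; push_neg at h; exact hxy (funext h)
  refine Finset.sum_involution (fun A _ => A + Matrix.single i i 1) ?_ ?_
    (fun A hA => E_mem i A hA) (fun A _ => E_invol i A)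
  · intro A hA
    rw [pow_add, pow_add, quad_flip, quad_flip]
    have hxyi : (-1:ℂ) ^ ((x i : ℕ)) * (-1:ℂ) ^ ((y i : ℕ)) = -1 := by
      have hx : x i = 0 ∨ x i = 1 := by omega
      have hy : y i = 0 ∨ y i = 1 := by omega
      rcases hx with h | h <;> rcases hy with h' | h' <;>
        first
        | (exact absurd (h.trans h'.symm) hi)
        | (rw [h, h']; norm_num)
    linear_combination ((-1:ℂ) ^ quadB A x * (-1:ℂ) ^ quadB A y) * hxyi
  · intro A hA _
    intro hcontra
    have := congrFun (congrFun hcontra i) i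
    simp [Matrix.add_apply, Matrix.single] at this

lemma outer_entry {n : ℕ} (A : Matrix (Fin n) (Fin n) (Fin 2)) (x y : Bits n) :
    outer (phiReq A) x y = (-1:ℂ) ^ (quadB A x + quadB A y) / (2:ℂ) ^ n := by
  show phiReq A x * (starRingEnd ℂ) (phiReq A y) = _
  unfold phiReq
  rw [map_div₀, map_pow, map_neg, _root_.map_one, Complex.conj_ofReal]
  rw [div_mul_div_comm, ← pow_add]
  congr 1
  rw [← Complex.ofReal_mul, Real.mul_self_sqrt (by positivity)]
  push_cast; ring


/-- the uniform average over `A ∈ ℬₙ` of the rank-one projector onto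
`φ^{req}_A` is the maximally mixed state `(1/2ⁿ)·I`. -/
theorem respovm_first_moment (n : ℕ) (hn : 1 ≤ n) :
    (((Bn n).card : ℂ))⁻¹ • ∑ A ∈ Bn n, outer (phiReq A) =
      ((2 : ℂ) ^ n)⁻¹ • (1 : Matrix (Bits n) (Bits n) ℂ) := by
  have h0 : (0 : Matrix (Fin n) (Fin n) (Fin 2)) ∈ Bn n := by simp [Bn]
  have hcard : ((Bn n).card : ℂ) ≠ 0 :=
    Nat.cast_ne_zero.mpr (Finset.card_ne_zero_of_mem h0)
  have h2n : ((2:ℂ) ^ n) ≠ 0 := pow_ne_zero _ two_ne_zero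
  ext x y
  simp only [Matrix.smul_apply, Matrix.sum_apply, smul_eq_mul, Matrix.one_apply]
  rw [Finset.sum_congr rfl (fun A _ => outer_entry A x y), ← Finset.sum_div]
  by_cases hxy : x = y
  · subst hxy
    have hsum : ∑ A ∈ Bn n, (-1:ℂ) ^ (quadB A x + quadB A x) = ((Bn n).card : ℂ) := by
      rw [Finset.sum_congr rfl (fun A _ => Even.neg_one_pow ⟨quadB A x, rfl⟩)]
      simp
    rw [hsum, if_pos rfl]
    field_simp
  · rw [sum_sign_ne x y hxy, if_neg hxy]
    simp
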